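/- arXiv:1305.1454 — 4 statements merged into one kernel-verified Lean document; each statement's English description precedes it below -/
import Mathlib

section
/- (Carré inequality) Let A be an n×n max-plus matrix with Tr(A) = tr A ⊕ tr A² ⊕ ... ⊕ tr Aⁿ ≤ 0. Then for every integer k ≥ 0, the matrix power A^k satisfies A^k ≤ A* entrywise, where A* = I ⊕ A ⊕ A² ⊕ ... ⊕ A^{n-1}. -/
noncomputable section

/-- Max-plus carrier: ℝ ∪ {-∞}. Addition ⊕ is `max`, multiplication ⊗ is `+`
(with ⊥ = -∞ absorbing), zero is ⊥ and unit is `(0 : ℝ)`. -/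
abbrev MP := WithBot ℝ

/-- Multiplicative conjugate: negate a finite value, send -∞ to -∞. -/
def mpInv (a : MP) : MP := a.map (fun t => -t)

/-- Max-plus matrix product. -/
def mpMulM {l m n : ℕ} (A : Fin l → Fin m → MP) (B : Fin m → Fin n → MP) :
    Fin l → Fin n → MP := fun i j => Finset.univ.sup fun k => A i k + B k j

/-- Max-plus matrix-vector product. -/
def mpMulV {m n : ℕ} (A : Fin m → Fin n → MP) (x : Fin n → MP) : Fin m → MP :=
  fun i => Finset.univ.sup fun j => A i j + x j

/-- Max-plus identity matrix. -/
def mpId {n : ℕ} : Fin n → Fin n → MP := fun i j => if i = j then ((0:ℝ) : MP) else ⊥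

/-- Max-plus matrix power. -/
def mpPow {n : ℕ} (A : Fin n → Fin n → MP) : ℕ → (Fin n → Fin n → MP)
  | 0 => mpId
  | k+1 => mpMulM (mpPow A k) A

/-- Max-plus trace. -/
def mpTr {n : ℕ} (A : Fin n → Fin n → MP) : MP := Finset.univ.sup fun i => A i i

/-- Tr(A) = tr A ⊕ tr A² ⊕ ⋯ ⊕ tr Aⁿ. -/
def mpTR {n : ℕ} (A : Fin n → Fin n → MP) : MP :=
  (Finset.Icc 1 n).sup fun m => mpTr (mpPow A m)

/-- Kleene star A* = I ⊕ A ⊕ ⋯ ⊕ A^{n-1}. -/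
def mpStar {n : ℕ} (A : Fin n → Fin n → MP) : Fin n → Fin n → MP :=
  fun i j => (Finset.range n).sup fun k => mpPow A k i j

/-- Max-plus spectral radius λ = max_{1≤m≤n} tr(A^m)^{1/m}. -/
def mpLam {n : ℕ} (A : Fin n → Fin n → MP) : MP :=
  (Finset.Icc 1 n).sup fun m => (mpTr (mpPow A m)).map (fun t => t / (m : ℝ))

/-- The alternating product B^{i₀} A B^{i₁} A ⋯ A B^{iₖ}. -/
def mpChain {n : ℕ} (A B : Fin n → Fin n → MP) : (k : ℕ) → (Fin (k+1) → ℕ) → (Fin n → Fin n → MP)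
  | 0, i => mpPow B (i 0)
  | (k+1), i => mpMulM (mpChain A B k (fun j => i j.castSucc)) (mpMulM A (mpPow B (i (Fin.last (k+1)))))

/-- weight of a path of length k -/
def pathW {n : ℕ} (A : Fin n → Fin n → MP) (k : ℕ) (p : ℕ → Fin n) : MP :=
  ∑ t ∈ Finset.range k, A (p t) (p (t+1))

lemma path_le_pow {n : ℕ} (A : Fin n → Fin n → MP) :
    ∀ (k : ℕ) (p : ℕ → Fin n), pathW A k p ≤ mpPow A k (p 0) (p k) := by
  intro k
  induction k with
  | zero => intro p; simp [pathW, mpPow, mpId]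
  | succ k ih =>
    intro p
    calc pathW A (k+1) p = pathW A k p + A (p k) (p (k+1)) := Finset.sum_range_succ _ _
      _ ≤ mpPow A k (p 0) (p k) + A (p k) (p (k+1)) := add_le_add_left (ih p) _
      _ ≤ mpPow A (k+1) (p 0) (p (k+1)) :=
        Finset.le_sup (f := fun m => mpPow A k (p 0) m + A m (p (k+1))) (Finset.mem_univ (p k))

lemma exists_path {n : ℕ} (A : Fin n → Fin n → MP) (i : Fin n) :
    ∀ k, 1 ≤ k → ∀ j : Fin n, ∃ p : ℕ → Fin n,
      p 0 = i ∧ p k = j ∧ mpPow A k i j ≤ pathW A k p := by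
  intro k hk
  induction k, hk using Nat.le_induction with
  | base =>
    intro j
    refine ⟨fun t => if t = 0 then i else j, by simp, by simp, ?_⟩
    have h1 : pathW A 1 (fun t => if t = 0 then i else j) = A i j := by
      simp [pathW]
    rw [h1]
    show mpMulM mpId A i j ≤ A i j
    refine Finset.sup_le fun m _ => ?_
    by_cases hm : i = m
    · subst hm; simp [mpId]
    · simp [mpId, hm]
  | succ k hk ih =>
    intro j
    have hne : (Finset.univ : Finset (Fin n)).Nonempty := ⟨i, Finset.mem_univ i⟩
    obtain ⟨m, -, hm⟩ := Finset.exists_mem_eq_sup Finset.univ hne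
      (fun m => mpPow A k i m + A m j)
    obtain ⟨p, hp0, hpk, hle⟩ := ih m
    refine ⟨fun t => if t ≤ k then p t else j, by simp [hp0], by simp, ?_⟩
    have hsum : pathW A (k+1) (fun t => if t ≤ k then p t else j)
        = pathW A k p + A m j := by
      rw [pathW, Finset.sum_range_succ]
      congr 1
      · refine Finset.sum_congr rfl fun t ht => ?_
        have ht' := Finset.mem_range.1 ht
        rw [if_pos (le_of_lt ht'), if_pos (Nat.succ_le_of_lt ht')]
      · rw [if_pos (le_refl k), if_neg (by omega), hpk]
    rw [hsum]
    calc mpPow A (k+1) i j = mpPow A k i m + A m j := hm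
      _ ≤ pathW A k p + A m j := add_le_add_left hle _

lemma splice {n : ℕ} (A : Fin n → Fin n → MP) (h : mpTR A ≤ ((0:ℝ) : MP))
    (k a b : ℕ) (p : ℕ → Fin n) (hab : a < b) (hbn : b ≤ n) (hbk : b ≤ k)
    (hpp : p a = p b) :
    pathW A k p ≤ pathW A (k - (b - a)) (fun t => if t < a then p t else p (t + (b - a))) := by
  set d := b - a with hd
  set k' := k - d with hk'
  set q : ℕ → Fin n := fun t => if t < a then p t else p (t + d) with hq
  have hdk : d ≤ k := le_trans (Nat.sub_le b a) hbk
  have had : a + d = b := by omega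
  -- cycle weight ≤ 0
  have hcyc : (∑ t ∈ Finset.Ico a b, A (p t) (p (t+1))) ≤ ((0:ℝ) : MP) := by
    have hshift : (∑ t ∈ Finset.Ico a b, A (p t) (p (t+1)))
        = pathW A d (fun u => p (a + u)) := by
      rw [Finset.sum_Ico_eq_sum_range, pathW]
      exact Finset.sum_congr rfl fun u _ => rfl
    rw [hshift]
    have h1 := path_le_pow A d (fun u => p (a + u))
    have h3 : p (a + d) = p a := by rw [had, hpp]
    rw [Nat.add_zero, h3] at h1
    refine le_trans h1 (le_trans ?_ h)
    refine le_trans (Finset.le_sup (f := fun i => mpPow A d i i) (Finset.mem_univ (p a))) ?_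
    exact Finset.le_sup (f := fun m => mpTr (mpPow A m)) (Finset.mem_Icc.2 ⟨by omega, by omega⟩)
  -- decompose original path
  have hsplit : pathW A k p
      = ((∑ t ∈ Finset.Ico 0 a, A (p t) (p (t+1)))
        + (∑ t ∈ Finset.Ico a b, A (p t) (p (t+1))))
        + (∑ t ∈ Finset.Ico b k, A (p t) (p (t+1))) := by
    rw [pathW, Finset.range_eq_Ico,
      ← Finset.sum_Ico_consecutive _ (Nat.zero_le b) hbk,
      ← Finset.sum_Ico_consecutive _ (Nat.zero_le a) (le_of_lt hab)]
  -- edge weights of the spliced path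
  have hq0 : ∀ t < a, A (q t) (q (t+1)) = A (p t) (p (t+1)) := by
    intro t ht
    have h1 : q t = p t := by simp only [hq, if_pos ht]
    have h2 : q (t+1) = p (t+1) := by
      by_cases h3 : t + 1 < a
      · simp only [hq, if_pos h3]
      · have h4 : t + 1 = a := by omega
        simp only [hq, if_neg (show ¬ t + 1 < a by omega)]
        rw [h4, had, ← hpp]
    rw [h1, h2]
  have hq1 : ∀ t, a ≤ t → A (q t) (q (t+1)) = A (p (t + d)) (p (t + d + 1)) := by
    intro t ht
    have h1 : q t = p (t + d) := by
      simp only [hq, if_neg (show ¬ t < a by omega)]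
    have h2 : q (t+1) = p (t + d + 1) := by
      simp only [hq, if_neg (show ¬ t + 1 < a by omega)]
      congr 1
      omega
    rw [h1, h2]
  -- decompose spliced path
  have hsplice : pathW A k' q
      = (∑ t ∈ Finset.Ico 0 a, A (p t) (p (t+1)))
        + (∑ t ∈ Finset.Ico b k, A (p t) (p (t+1))) := by
    have hak' : a ≤ k' := by omega
    rw [pathW, Finset.range_eq_Ico,
      ← Finset.sum_Ico_consecutive _ (Nat.zero_le a) hak']
    congr 1
    · exact Finset.sum_congr rfl fun t ht => hq0 t (Finset.mem_Ico.1 ht).2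
    · rw [Finset.sum_Ico_eq_sum_range, Finset.sum_Ico_eq_sum_range]
      have hkk : k' - a = k - b := by omega
      rw [hkk]
      refine Finset.sum_congr rfl fun u _ => ?_
      rw [hq1 (a + u) (by omega)]
      congr 2 <;> omega
  calc pathW A k p
      = ((∑ t ∈ Finset.Ico 0 a, A (p t) (p (t+1)))
          + (∑ t ∈ Finset.Ico b k, A (p t) (p (t+1))))
        + (∑ t ∈ Finset.Ico a b, A (p t) (p (t+1))) := by rw [hsplit]; abel
    _ ≤ ((∑ t ∈ Finset.Ico 0 a, A (p t) (p (t+1)))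
          + (∑ t ∈ Finset.Ico b k, A (p t) (p (t+1))))
        + ((0:ℝ) : MP) := add_le_add_right hcyc _
    _ = pathW A k' q := by
        rw [show ((0:ℝ) : MP) = 0 from rfl, add_zero, hsplice]


/-- Carré inequality: if Tr(A) ≤ 𝟙 then A^k ≤ A* for all k ≥ 0. -/
theorem maxplus_carre {n : ℕ} (A : Fin n → Fin n → MP) (h : mpTR A ≤ ((0:ℝ) : MP)) :
    ∀ k : ℕ, ∀ i j : Fin n, mpPow A k i j ≤ mpStar A i j := by
  intro k
  induction k using Nat.strong_induction_on with
  | _ k ih =>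
    intro i j
    by_cases hk : k < n
    · exact Finset.le_sup (f := fun m => mpPow A m i j) (Finset.mem_range.2 hk)
    · push_neg at hk
      have hn1 : 1 ≤ n := i.pos
      have hk1 : 1 ≤ k := le_trans hn1 hk
      obtain ⟨p, hp0, hpk, hle⟩ := exists_path A i k hk1 j
      -- pigeonhole on the first n+1 vertices
      obtain ⟨a, ha, b, hb, hne, heq⟩ :=
        Finset.exists_ne_map_eq_of_card_lt_of_maps_to
          (s := Finset.range (n+1)) (t := (Finset.univ : Finset (Fin n)))
          (by simp) (fun x _ => Finset.mem_univ (p x))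
      have ha' : a ≤ n := by have := Finset.mem_range.1 ha; omega
      have hb' : b ≤ n := by have := Finset.mem_range.1 hb; omega
      -- wlog a < b
      obtain ⟨a, b, hab, han, hbn, hpp⟩ :
          ∃ a b : ℕ, a < b ∧ a ≤ n ∧ b ≤ n ∧ p a = p b := by
        rcases lt_or_gt_of_ne hne with hlt | hgt
        · exact ⟨a, b, hlt, ha', hb', heq⟩
        · exact ⟨b, a, hgt, hb', ha', heq.symm⟩
      set d := b - a with hd
      set k' := k - d with hk'
      have hd1 : 1 ≤ d := by omega
      have hbk : b ≤ k := le_trans hbn hk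
      have hsp := splice A h k a b p hab hbn hbk hpp
      set q : ℕ → Fin n := fun t => if t < a then p t else p (t + d) with hq
      have hq0 : q 0 = i := by
        by_cases h0 : 0 < a
        · simp only [hq, if_pos h0, hp0]
        · have ha0 : a = 0 := by omega
          simp only [hq, if_neg (show ¬ (0:ℕ) < a by omega)]
          have : 0 + d = b := by omega
          rw [this, ← hpp, ha0, hp0]
      have hqk : q k' = j := by
        simp only [hq, if_neg (show ¬ k' < a by omega)]
        have : k' + d = k := by omega
        rw [this, hpk]
      have hk'lt : k' < k := by omega
      have h2 := path_le_pow A k' q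
      rw [hq0, hqk] at h2
      calc mpPow A k i j ≤ pathW A k p := hle
        _ ≤ pathW A k' q := hsp
        _ ≤ mpPow A k' i j := h2
        _ ≤ mpStar A i j := ih k' hk'lt i j
end
end

section
/- Let A be an n×n max-plus matrix with Tr(A) ≤ 0, and let b ∈ (ℝ ∪ {-∞})^n. Then every vector of the form x = A* ⊗ u with u a regular vector satisfying u ≥ b is a regular solution of the inequality A ⊗ x ⊕ b ≤ x, and conversely every regular solution of this inequality has this form. -/
noncomputable section

-- helper lemmas

lemma mp_sup_add {α : Type*} (s : Finset α) (f : α → MP) (c : MP) :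
    s.sup f + c = s.sup (fun a => f a + c) := by
  rcases s.eq_empty_or_nonempty with h | h
  · subst h; simp
  · apply le_antisymm
    · obtain ⟨a, ha, hEq⟩ := Finset.exists_mem_eq_sup s h f
      rw [hEq]; exact Finset.le_sup (f := fun a => f a + c) ha
    · exact Finset.sup_le fun a ha => add_le_add_left (Finset.le_sup ha) c

lemma mp_add_sup {α : Type*} (s : Finset α) (f : α → MP) (c : MP) :
    c + s.sup f = s.sup (fun a => c + f a) := by
  rcases s.eq_empty_or_nonempty with h | h
  · subst h; simp
  · apply le_antisymm
    · obtain ⟨a, ha, hEq⟩ := Finset.exists_mem_eq_sup s h f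
      rw [hEq]; exact Finset.le_sup (f := fun a => c + f a) ha
    · exact Finset.sup_le fun a ha => add_le_add_right (Finset.le_sup ha) c

lemma mpMulV_id {n : ℕ} (x : Fin n → MP) : mpMulV mpId x = x := by
  funext i
  apply le_antisymm
  · apply Finset.sup_le
    intro j _
    by_cases hij : i = j
    · subst hij; simp [mpId]
    · simp [mpId, hij]
  · have := Finset.le_sup (f := fun j => mpId i j + x j) (Finset.mem_univ i)
    simpa [mpId, mpMulV] using this

lemma mpMulV_assoc {l m n : ℕ} (B : Fin l → Fin m → MP) (C : Fin m → Fin n → MP)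
    (x : Fin n → MP) : mpMulV (mpMulM B C) x = mpMulV B (mpMulV C x) := by
  funext i
  show Finset.univ.sup (fun j => (Finset.univ.sup fun k => B i k + C k j) + x j)
      = Finset.univ.sup fun k => B i k + Finset.univ.sup fun j => C k j + x j
  calc Finset.univ.sup (fun j => (Finset.univ.sup fun k => B i k + C k j) + x j)
      = Finset.univ.sup (fun j => Finset.univ.sup fun k => B i k + C k j + x j) := by
        simp only [mp_sup_add]
    _ = Finset.univ.sup (fun k => Finset.univ.sup fun j => B i k + C k j + x j) :=
        Finset.sup_comm _ _ _
    _ = Finset.univ.sup fun k => B i k + Finset.univ.sup fun j => C k j + x j := by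
        simp only [mp_add_sup, add_assoc]

lemma mpMulM_assoc {l m n o : ℕ} (X : Fin l → Fin m → MP) (Y : Fin m → Fin n → MP)
    (Z : Fin n → Fin o → MP) : mpMulM (mpMulM X Y) Z = mpMulM X (mpMulM Y Z) := by
  funext i j
  show Finset.univ.sup (fun k => (Finset.univ.sup fun s => X i s + Y s k) + Z k j)
      = Finset.univ.sup fun s => X i s + Finset.univ.sup fun k => Y s k + Z k j
  calc Finset.univ.sup (fun k => (Finset.univ.sup fun s => X i s + Y s k) + Z k j)
      = Finset.univ.sup (fun k => Finset.univ.sup fun s => X i s + Y s k + Z k j) := by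
        simp only [mp_sup_add]
    _ = Finset.univ.sup (fun s => Finset.univ.sup fun k => X i s + Y s k + Z k j) :=
        Finset.sup_comm _ _ _
    _ = _ := by simp only [mp_add_sup, add_assoc]

lemma mpPow_succ' {n : ℕ} (A : Fin n → Fin n → MP) (k : ℕ) :
    mpPow A (k+1) = mpMulM A (mpPow A k) := by
  induction k with
  | zero =>
      show mpMulM mpId A = mpMulM A mpId
      funext i j
      apply le_antisymm
      · apply Finset.sup_le; intro s _
        by_cases his : i = s
        · subst his
          have : A i j + mpId j j ≤ _ := Finset.le_sup (f := fun k => A i k + mpId k j) (Finset.mem_univ j)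
          simpa [mpId, mpMulM] using this
        · simp [mpId, his]
      · apply Finset.sup_le; intro s _
        by_cases hsj : s = j
        · subst hsj
          have : mpId i i + A i s ≤ _ := Finset.le_sup (f := fun k => mpId i k + A k s) (Finset.mem_univ i)
          simpa [mpId, mpMulM] using this
        · simp [mpId, hsj]
  | succ k ih =>
      show mpMulM (mpPow A (k+1)) A = mpMulM A (mpMulM (mpPow A k) A)
      rw [ih, mpMulM_assoc]

lemma mpMulV_mono_vec {m n : ℕ} (A : Fin m → Fin n → MP) {x y : Fin n → MP}
    (h : ∀ j, x j ≤ y j) : ∀ i, mpMulV A x i ≤ mpMulV A y i := by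
  intro i
  exact Finset.sup_le fun j _ =>
    le_trans (add_le_add_right (h j) _)
      (Finset.le_sup (f := fun j => A i j + y j) (Finset.mem_univ j))

lemma mpMulV_mono_mat {m n : ℕ} {M N : Fin m → Fin n → MP} (x : Fin n → MP)
    (h : ∀ i j, M i j ≤ N i j) : ∀ i, mpMulV M x i ≤ mpMulV N x i := by
  intro i
  exact Finset.sup_le fun j _ =>
    le_trans (add_le_add_left (h i j) _)
      (Finset.le_sup (f := fun j => N i j + x j) (Finset.mem_univ j))

-- path weights

def W {n : ℕ} (A : Fin n → Fin n → MP) (p : ℕ → Fin n) (a l : ℕ) : MP :=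
  ∑ t ∈ Finset.range l, A (p (a+t)) (p (a+t+1))

lemma W_le_pow {n : ℕ} (A : Fin n → Fin n → MP) (p : ℕ → Fin n) :
    ∀ l a, W A p a l ≤ mpPow A l (p a) (p (a+l)) := by
  intro l
  induction l with
  | zero => intro a; simp [W, mpPow, mpId]
  | succ l ih =>
      intro a
      have : W A p a (l+1) = W A p a l + A (p (a+l)) (p (a+l+1)) := by
        simp [W, Finset.sum_range_succ]
      rw [this]
      have h1 : W A p a l + A (p (a+l)) (p (a+l+1))
          ≤ mpPow A l (p a) (p (a+l)) + A (p (a+l)) (p (a+l+1)) :=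
        add_le_add_left (ih a) _
      refine h1.trans ?_
      have := Finset.le_sup (f := fun k => mpPow A l (p a) k + A k (p (a+l+1)))
        (Finset.mem_univ (p (a+l)))
      simpa [mpPow, mpMulM, show a + (l+1) = a+l+1 by ring] using this

lemma W_add {n : ℕ} (A : Fin n → Fin n → MP) (p : ℕ → Fin n) (a l m : ℕ) :
    W A p a (l + m) = W A p a l + W A p (a+l) m := by
  simp only [W, Finset.sum_range_add]
  congr 1
  · apply Finset.sum_congr rfl
    intro t _
    congr 2 <;> ring
  
lemma pow_exists_path {n : ℕ} (A : Fin n → Fin n → MP) :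
    ∀ l (i j : Fin n), mpPow A l i j = ⊥ ∨
      ∃ p : ℕ → Fin n, p 0 = i ∧ p l = j ∧ mpPow A l i j ≤ W A p 0 l := by
  intro l
  induction l with
  | zero =>
      intro i j
      by_cases hij : i = j
      · subst hij
        right
        exact ⟨fun _ => i, rfl, rfl, by simp [mpPow, mpId, W]⟩
      · left; simp [mpPow, mpId, hij]
  | succ l ih =>
      intro i j
      have hne : (Finset.univ : Finset (Fin n)).Nonempty := ⟨i, Finset.mem_univ i⟩
      obtain ⟨k, _, hk⟩ := Finset.exists_mem_eq_sup Finset.univ hne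
        (fun k => mpPow A l i k + A k j)
      have hpow : mpPow A (l+1) i j = mpPow A l i k + A k j := hk
      rcases ih i k with hbot | ⟨p, hp0, hpl, hple⟩
      · left; rw [hpow, hbot, WithBot.bot_add]
      · right
        refine ⟨fun t => if t ≤ l then p t else j, by simp [hp0], by simp, ?_⟩
        have hW : W A (fun t => if t ≤ l then p t else j) 0 (l+1)
            = W A p 0 l + A (p l) j := by
          rw [W, Finset.sum_range_succ]
          congr 1
          · apply Finset.sum_congr rfl
            intro t ht
            have ht' := Finset.mem_range.1 ht
            simp only [zero_add]
            rw [if_pos (by omega), if_pos (by omega)]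
          · simp only [zero_add]
            rw [if_pos (le_refl l), if_neg (by omega)]
        rw [hpow, hW, hpl]
        exact add_le_add_left hple _

lemma pow_n_le_star {n : ℕ} (A : Fin n → Fin n → MP) (h : mpTR A ≤ ((0:ℝ) : MP)) :
    ∀ i j, mpPow A n i j ≤ mpStar A i j := by
  intro i j
  rcases pow_exists_path A n i j with hbot | ⟨p, hp0, hpn, hle⟩
  · rw [hbot]; exact bot_le
  -- pigeonhole
  have hcard : Fintype.card (Fin n) < Fintype.card (Fin (n+1)) := by simp
  obtain ⟨a, b, hab, heq⟩ := Fintype.exists_ne_map_eq_of_card_lt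
    (fun t : Fin (n+1) => p t.val) hcard
  -- get s < t ≤ n with p s = p t
  obtain ⟨s, t, hst, htn, hpst⟩ : ∃ s t : ℕ, s < t ∧ t ≤ n ∧ p s = p t := by
    rcases lt_or_gt_of_ne (fun hv : a = b => hab hv) with hlt | hgt
    · exact ⟨a.val, b.val, by exact_mod_cast hlt, Nat.lt_succ_iff.1 b.isLt, heq⟩
    · exact ⟨b.val, a.val, by exact_mod_cast hgt, Nat.lt_succ_iff.1 a.isLt, heq.symm⟩
  set d := t - s with hd
  set e := n - t with he
  have hsd : s + d = t := by omega
  have hte : t + e = n := by omega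
  have hd1 : 1 ≤ d := by omega
  have hdn : d ≤ n := by omega
  have hm : s + e < n := by omega
  -- split the weight
  have hsplit : W A p 0 n = W A p 0 s + (W A p s d + W A p t e) := by
    have h1 := congrArg (W A p 0) (show n = s + (d + e) by omega)
    rw [h1, W_add, W_add, zero_add, hsd]
  -- middle cycle ≤ 0
  have hmid : W A p s d ≤ ((0:ℝ) : MP) := by
    have h1 : W A p s d ≤ mpPow A d (p s) (p s) := by
      have := W_le_pow A p d s
      rwa [hsd, ← hpst] at this
    have h2 : mpPow A d (p s) (p s) ≤ mpTr (mpPow A d) :=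
      Finset.le_sup (f := fun i => mpPow A d i i) (Finset.mem_univ (p s))
    have h3 : mpTr (mpPow A d) ≤ mpTR A :=
      Finset.le_sup (f := fun m => mpTr (mpPow A m)) (Finset.mem_Icc.2 ⟨hd1, hdn⟩)
    exact le_trans h1 (le_trans h2 (le_trans h3 h))
  -- spliced path
  set q : ℕ → Fin n := fun r => if r ≤ s then p r else p (r + d) with hq
  have hq0s : W A q 0 s = W A p 0 s := by
    apply Finset.sum_congr rfl
    intro r hr
    have hr' := Finset.mem_range.1 hr
    simp only [hq, zero_add]
    rw [if_pos (by omega), if_pos (by omega)]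
  have hqse : W A q s e = W A p t e := by
    apply Finset.sum_congr rfl
    intro r hr
    have hr' := Finset.mem_range.1 hr
    simp only [hq]
    congr 1
    · by_cases hr0 : r = 0
      · subst hr0; rw [if_pos (by omega)]; simp [hpst]
      · rw [if_neg (by omega)]; congr 1; omega
    · rw [if_neg (by omega)]; congr 1; omega
  have hWq : W A q 0 (s + e) = W A p 0 s + W A p t e := by
    rw [W_add, zero_add, hq0s, hqse]
  have hq0 : q 0 = i := by simp only [hq]; rw [if_pos (Nat.zero_le s)]; exact hp0
  have hqse2 : q (s + e) = j := by
    simp only [hq]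
    by_cases he0 : e = 0
    · rw [if_pos (by omega), show s + e = s from by omega, hpst,
        show t = n from by omega, hpn]
    · rw [if_neg (by omega), show s + e + d = n from by omega, hpn]
  -- assemble
  have step1 : mpPow A n i j ≤ W A p 0 s + W A p t e := by
    refine hle.trans ?_
    rw [hsplit]
    calc W A p 0 s + (W A p s d + W A p t e)
        ≤ W A p 0 s + (((0:ℝ):MP) + W A p t e) :=
          add_le_add_right (add_le_add_left hmid _) _
      _ = W A p 0 s + W A p t e := by norm_num
  have step2 : W A p 0 s + W A p t e ≤ mpPow A (s+e) i j := by
    rw [← hWq]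
    have := W_le_pow A q (s+e) 0
    rwa [zero_add, hq0, hqse2] at this
  have step3 : mpPow A (s+e) i j ≤ mpStar A i j :=
    Finset.le_sup (f := fun k => mpPow A k i j) (Finset.mem_range.2 hm)
  exact step1.trans (step2.trans step3)

lemma mulV_star_eq_sup {n : ℕ} (A : Fin n → Fin n → MP) (x : Fin n → MP) (i : Fin n) :
    mpMulV (mpStar A) x i = (Finset.range n).sup fun k => mpMulV (mpPow A k) x i := by
  show Finset.univ.sup (fun j => ((Finset.range n).sup fun k => mpPow A k i j) + x j) = _
  calc Finset.univ.sup (fun j => ((Finset.range n).sup fun k => mpPow A k i j) + x j)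
      = Finset.univ.sup (fun j => (Finset.range n).sup fun k => mpPow A k i j + x j) := by
        simp only [mp_sup_add]
    _ = (Finset.range n).sup (fun k => Finset.univ.sup fun j => mpPow A k i j + x j) :=
        Finset.sup_comm _ _ _

lemma mulM_star_le_star {n : ℕ} (A : Fin n → Fin n → MP) (h : mpTR A ≤ ((0:ℝ) : MP)) :
    ∀ i j, mpMulM A (mpStar A) i j ≤ mpStar A i j := by
  intro i j
  have hEq : mpMulM A (mpStar A) i j
      = (Finset.range n).sup fun k => mpMulM A (mpPow A k) i j := by
    show Finset.univ.sup (fun s => A i s + (Finset.range n).sup fun k => mpPow A k s j) = _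
    calc Finset.univ.sup (fun s => A i s + (Finset.range n).sup fun k => mpPow A k s j)
        = Finset.univ.sup (fun s => (Finset.range n).sup fun k => A i s + mpPow A k s j) := by
          simp only [mp_add_sup]
      _ = (Finset.range n).sup (fun k => Finset.univ.sup fun s => A i s + mpPow A k s j) :=
          Finset.sup_comm _ _ _
  rw [hEq]
  apply Finset.sup_le
  intro k hk
  have hk' := Finset.mem_range.1 hk
  have : mpMulM A (mpPow A k) = mpPow A (k+1) := (mpPow_succ' A k).symm
  rw [this]
  rcases Nat.lt_or_ge (k+1) n with hlt | hge
  · exact Finset.le_sup (f := fun m => mpPow A m i j) (Finset.mem_range.2 hlt)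
  · have : k + 1 = n := by omega
    rw [this]
    exact pow_n_le_star A h i j

/-- If Tr(A) ≤ 𝟙, the regular solutions of A ⊗ x ⊕ b ≤ x are exactly the
vectors x = A* ⊗ u for regular u with u ≥ b. -/
theorem maxplus_ineq_solutions {n : ℕ} (A : Fin n → Fin n → MP) (b : Fin n → MP)
    (h : mpTR A ≤ ((0:ℝ) : MP)) (x : Fin n → MP) :
    ((∀ i, x i ≠ ⊥) ∧ (∀ i, max (mpMulV A x i) (b i) ≤ x i)) ↔
    (∃ u : Fin n → ℝ, (∀ i, b i ≤ (u i : MP)) ∧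
      ∀ i, x i = mpMulV (mpStar A) (fun j => (u j : MP)) i) := by
  constructor
  · rintro ⟨hreg, hin⟩
    refine ⟨fun i => (x i).unbot (hreg i), ?_, ?_⟩
    · intro i
      rw [WithBot.coe_unbot]
      exact le_trans (le_max_right _ _) (hin i)
    · intro i
      have hx : (fun j => (((x j).unbot (hreg j) : ℝ) : MP)) = x := by
        funext j; exact WithBot.coe_unbot _ _
      rw [hx]
      have hAx : ∀ j, mpMulV A x j ≤ x j := fun j => le_trans (le_max_left _ _) (hin j)
      -- powers decrease
      have hpow : ∀ k, ∀ j, mpMulV (mpPow A k) x j ≤ x j := by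
        intro k
        induction k with
        | zero => intro j; rw [show mpPow A 0 = mpId from rfl, mpMulV_id]
        | succ k ih =>
            intro j
            have : mpMulV (mpPow A (k+1)) x = mpMulV (mpPow A k) (mpMulV A x) := by
              rw [show mpPow A (k+1) = mpMulM (mpPow A k) A from rfl, mpMulV_assoc]
            rw [this]
            exact le_trans (mpMulV_mono_vec _ hAx j) (ih j)
      apply le_antisymm
      · -- x i ≤ star x i via identity component
        have h0 : mpId i i ≤ mpStar A i i := by
          have : mpPow A 0 i i ≤ mpStar A i i :=
            Finset.le_sup (f := fun k => mpPow A k i i) (Finset.mem_range.2 i.pos)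
          exact this
        have h1 : x i = mpId i i + x i := by simp [mpId]
        rw [h1]
        refine le_trans (add_le_add_left h0 _) ?_
        exact Finset.le_sup (f := fun j => mpStar A i j + x j) (Finset.mem_univ i)
      · rw [mulV_star_eq_sup]
        exact Finset.sup_le fun k _ => hpow k i
  · rintro ⟨u, hbu, hx⟩
    have hux : ∀ i, ((u i : MP)) ≤ x i := by
      intro i
      rw [hx i]
      have h0 : ((0:ℝ):MP) ≤ mpStar A i i := by
        have : mpPow A 0 i i ≤ mpStar A i i :=
          Finset.le_sup (f := fun k => mpPow A k i i) (Finset.mem_range.2 i.pos)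
        simpa [mpPow, mpId] using this
      have : ((u i : MP)) = ((0:ℝ):MP) + (u i : MP) := by norm_num
      rw [this]
      refine le_trans (add_le_add_left h0 _) ?_
      exact Finset.le_sup (f := fun j => mpStar A i j + (u j : MP)) (Finset.mem_univ i)
    constructor
    · intro i hbot
      have := hux i
      rw [hbot, le_bot_iff] at this
      exact WithBot.coe_ne_bot this
    · intro i
      apply max_le
      · have hx' : x = mpMulV (mpStar A) (fun j => (u j : MP)) := funext hx
        rw [hx', ← mpMulV_assoc]
        exact mpMulV_mono_mat _ (mulM_star_le_star A h) i
      · exact le_trans (hbu i) (hux i)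
end
end

section
/- Let A be an n×n max-plus matrix with Tr(A) > 0, where Tr(A) = tr A ⊕ ... ⊕ tr Aⁿ. Then for any vector b, the inequality A ⊗ x ⊕ b ≤ x has no regular solution x. -/
noncomputable section

/-- If Tr(A) > 𝟙 then A ⊗ x ⊕ b ≤ x has no regular solution. -/
theorem maxplus_ineq_no_solution {n : ℕ} (A : Fin n → Fin n → MP)
    (h : ((0:ℝ) : MP) < mpTR A) (b : Fin n → MP) :
    ¬ ∃ x : Fin n → ℝ,
        ∀ i, max (mpMulV A (fun j => (x j : MP)) i) (b i) ≤ (x i : MP) := by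
  rintro ⟨x, hx⟩
  -- extract a power with positive diagonal entry
  rw [mpTR, Finset.lt_sup_iff] at h
  obtain ⟨m, hm, hmlt⟩ := h
  rw [mpTr, Finset.lt_sup_iff] at hmlt
  obtain ⟨i0, _, hpos⟩ := hmlt
  -- From the inequality: A i j + x j ≤ x i for all i, j.
  have hA : ∀ i j, A i j + (x j : MP) ≤ (x i : MP) := by
    intro i j
    have h1 : mpMulV A (fun j => (x j : MP)) i ≤ (x i : MP) :=
      le_trans (le_max_left _ _) (hx i)
    exact le_trans (Finset.le_sup (f := fun j => A i j + (x j : MP))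
      (Finset.mem_univ j)) h1
  have hne : (Finset.univ : Finset (Fin n)).Nonempty := ⟨i0, Finset.mem_univ i0⟩
  -- Powers also satisfy it.
  have hpow : ∀ m i j, mpPow A m i j + (x j : MP) ≤ (x i : MP) := by
    intro m
    induction m with
    | zero =>
      intro i j
      simp only [mpPow, mpId]
      by_cases hij : i = j
      · subst hij; simp
      · simp [hij]
    | succ k ih =>
      intro i j
      simp only [mpPow, mpMulM]
      obtain ⟨k', _, hk'⟩ := Finset.exists_mem_eq_sup Finset.univ hne
        (fun k' => mpPow A k i k' + A k' j)
      rw [hk', add_assoc]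
      calc mpPow A k i k' + (A k' j + (x j : MP))
          ≤ mpPow A k i k' + (x k' : MP) := add_le_add_right (hA k' j) _
        _ ≤ (x i : MP) := ih i k'
  -- contradiction at i0
  have hc := hpow m i0 i0
  obtain ⟨r, hr⟩ : ∃ r : ℝ, mpPow A m i0 i0 = (r : MP) := by
    cases hcase : mpPow A m i0 i0 with
    | none => rw [hcase] at hpos; exact absurd hpos (by exact not_lt_bot)
    | some r => exact ⟨r, rfl⟩
  rw [hr] at hc hpos
  rw [← WithBot.coe_add] at hc
  have h1 : r + x i0 ≤ x i0 := WithBot.coe_le_coe.mp hc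
  have h2 : (0:ℝ) < r := WithBot.coe_lt_coe.mp hpos
  linarith
end
end

section
/- Let A, C, b, d be as in the constrained system A ⊗ x ⊕ b ≤ x, C ⊗ x ≤ d, with C column-regular and d regular. If Δ = Tr(A) ⊕ d⁻ ⊗ C ⊗ A* ⊗ b > 0, then the system has no regular solution. -/
noncomputable section

lemma mp_mulV_mono {m n : ℕ} (P : Fin m → Fin n → MP) {y z : Fin n → MP}
    (h : ∀ j, y j ≤ z j) (i : Fin m) : mpMulV P y i ≤ mpMulV P z i :=
  Finset.sup_le fun j _ =>
    le_trans (add_le_add_right (h j) _)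
      (Finset.le_sup (f := fun j => P i j + z j) (Finset.mem_univ j))

lemma mp_mulM_mulV_le {l m n : ℕ} (P : Fin l → Fin m → MP) (Q : Fin m → Fin n → MP)
    (x : Fin n → MP) (i : Fin l) :
    mpMulV (mpMulM P Q) x i ≤ mpMulV P (mpMulV Q x) i := by
  refine Finset.sup_le fun j _ => ?_
  show (Finset.univ.sup fun k => P i k + Q k j) + x j ≤ _
  rw [mp_sup_add]
  refine Finset.sup_le fun k _ => ?_
  rw [add_assoc]
  exact le_trans
    (add_le_add_right (Finset.le_sup (f := fun j => Q k j + x j) (Finset.mem_univ j)) (P i k))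
    (Finset.le_sup (f := fun k => P i k + mpMulV Q x k) (Finset.mem_univ k))

lemma mp_pow_mulV_le {n : ℕ} (A : Fin n → Fin n → MP) {y : Fin n → MP}
    (hy : ∀ i, mpMulV A y i ≤ y i) : ∀ k i, mpMulV (mpPow A k) y i ≤ y i := by
  intro k
  induction k with
  | zero =>
      intro i
      refine Finset.sup_le fun j _ => ?_
      by_cases h : i = j
      · subst h; simp [mpPow, mpId]
      · simp [mpPow, mpId, h]
  | succ k ih =>
      intro i
      refine le_trans (mp_mulM_mulV_le _ _ _ _) ?_
      exact le_trans (mp_mulV_mono _ hy i) (ih i)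

lemma mp_star_mulV_le {n : ℕ} (A : Fin n → Fin n → MP) {y : Fin n → MP}
    (hy : ∀ i, mpMulV A y i ≤ y i) (i : Fin n) : mpMulV (mpStar A) y i ≤ y i := by
  refine Finset.sup_le fun j _ => ?_
  show ((Finset.range n).sup fun k => mpPow A k i j) + y j ≤ y i
  rw [mp_sup_add]
  refine Finset.sup_le fun k _ => ?_
  exact le_trans (Finset.le_sup (f := fun j => mpPow A k i j + y j) (Finset.mem_univ j))
    (mp_pow_mulV_le A hy k i)

/-- If Δ = Tr(A) ⊕ d⁻ C A* b > 𝟙 then the system has no regular solution. -/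
theorem maxplus_system_no_solution {m n : ℕ} (A : Fin n → Fin n → MP)
    (C : Fin m → Fin n → MP) (hC : ∀ j, ∃ i, C i j ≠ ⊥)
    (b : Fin n → MP) (d : Fin m → ℝ)
    (hΔ : ((0:ℝ) : MP) < max (mpTR A)
        (Finset.univ.sup fun j =>
          (Finset.univ.sup fun i => ((-(d i) : ℝ) : MP) + mpMulM C (mpStar A) i j) + b j)) :
    ¬ ∃ x : Fin n → ℝ,
        (∀ i, max (mpMulV A (fun j => (x j : MP)) i) (b i) ≤ (x i : MP)) ∧
        (∀ i, mpMulV C (fun j => (x j : MP)) i ≤ (d i : MP)) := by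
  rintro ⟨x, hAx, hCx⟩
  set y : Fin n → MP := fun j => ((x j : ℝ) : MP) with hy_def
  have hA : ∀ i, mpMulV A y i ≤ y i := fun i => le_trans (le_max_left _ _) (hAx i)
  have hb : ∀ i, b i ≤ y i := fun i => le_trans (le_max_right _ _) (hAx i)
  rcases lt_max_iff.mp hΔ with h | h
  · -- Tr(A) > 0
    obtain ⟨k, hk, hk0⟩ := Finset.lt_sup_iff.mp h
    obtain ⟨i, -, hi0⟩ := Finset.lt_sup_iff.mp hk0
    obtain ⟨p, hp, hp0⟩ := WithBot.lt_iff_exists_coe.mp hi0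
    have hp0' : (0:ℝ) < p := by exact_mod_cast hp0
    have h1 : ((p + x i : ℝ) : MP) ≤ y i := by
      calc ((p + x i : ℝ) : MP) = mpPow A k i i + y i := by
            rw [hp]; push_cast; rfl
        _ ≤ mpMulV (mpPow A k) y i :=
            Finset.le_sup (f := fun j => mpPow A k i j + y j) (Finset.mem_univ i)
        _ ≤ y i := mp_pow_mulV_le A hA k i
    rw [hy_def] at h1
    simp only [] at h1
    have : p + x i ≤ x i := by exact_mod_cast h1
    linarith
  · -- d⁻ C A* b > 0
    obtain ⟨j, -, hj⟩ := Finset.lt_sup_iff.mp h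
    rw [mp_sup_add] at hj
    obtain ⟨i, -, hi⟩ := Finset.lt_sup_iff.mp hj
    rw [add_assoc] at hi
    have hlt : ((d i : ℝ) : MP) < mpMulM C (mpStar A) i j + b j := by
      have := WithBot.add_lt_add_left (x := ((d i : ℝ) : MP)) (WithBot.coe_ne_bot) hi
      rwa [WithBot.coe_zero, add_zero, ← add_assoc, ← WithBot.coe_add, add_neg_cancel, WithBot.coe_zero,
        zero_add] at this
    have hle : mpMulM C (mpStar A) i j + b j ≤ ((d i : ℝ) : MP) := by
      calc mpMulM C (mpStar A) i j + b j
          ≤ mpMulM C (mpStar A) i j + y j := add_le_add_right (hb j) _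
        _ ≤ mpMulV (mpMulM C (mpStar A)) y i :=
            Finset.le_sup (f := fun j => mpMulM C (mpStar A) i j + y j) (Finset.mem_univ j)
        _ ≤ mpMulV C (mpMulV (mpStar A) y) i := mp_mulM_mulV_le _ _ _ _
        _ ≤ mpMulV C y i := mp_mulV_mono _ (mp_star_mulV_le A hA) i
        _ ≤ ((d i : ℝ) : MP) := hCx i
    exact absurd hle (not_le.mpr hlt)
end
end
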